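/- For any even integer d ≥ 2, χ(P_3^d, d) ≥ log_2(d + 8) - 2, where P_3^d is the caterpillar-like tree obtained from a path v_0, v_1, …, v_d by attaching to each v_i (1 ≤ i ≤ d) a pendant path with i edges ending at v_i. -/

import Mathlib

/-- The tree `P₃ᵈ`: a path `v₀, …, v_d` (the vertices `(i, 0)` for `i ≤ d`),
together with, for each `1 ≤ i ≤ d`, a pendant path on `i` edges ending at
`v_i` (the vertices `(i, j)` for `1 ≤ j ≤ i`). -/
def Pgraph (d : ℕ) : SimpleGraph {p : ℕ × ℕ // p.1 ≤ d ∧ p.2 ≤ p.1} where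
  Adj a b :=
    (a.1.1 = b.1.1 ∧ (a.1.2 = b.1.2 + 1 ∨ b.1.2 = a.1.2 + 1)) ∨
    (a.1.2 = 0 ∧ b.1.2 = 0 ∧ (a.1.1 = b.1.1 + 1 ∨ b.1.1 = a.1.1 + 1))
  symm := ⟨by
    rintro a b (⟨h1, h2⟩ | ⟨h1, h2, h3⟩)
    · exact Or.inl ⟨h1.symm, h2.symm⟩
    · exact Or.inr ⟨h2, h1, h3.symm⟩⟩
  loopless := ⟨by
    rintro a (⟨-, h⟩ | ⟨-, -, h⟩) <;> omega⟩

namespace PgraphAux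

/-- A walk down a pendant leg. -/
lemma walk_down (d i : ℕ) (h : i ≤ d) : ∀ j (hj : j ≤ i),
    ∃ w : (Pgraph d).Walk ⟨(i, j), h, hj⟩ ⟨(i, 0), h, Nat.zero_le i⟩, w.length = j := by
  intro j
  induction j with
  | zero => intro hj; exact ⟨.nil, rfl⟩
  | succ n ih =>
    intro hj
    obtain ⟨w, hw⟩ := ih (Nat.le_of_succ_le hj)
    have hadj : (Pgraph d).Adj ⟨(i, n + 1), h, hj⟩ ⟨(i, n), h, Nat.le_of_succ_le hj⟩ :=
      Or.inl ⟨rfl, Or.inl rfl⟩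
    exact ⟨.cons hadj w, by simp [hw]⟩

/-- A walk along the spine. -/
lemma walk_spine (d i : ℕ) : ∀ k (hk : i + k ≤ d),
    ∃ w : (Pgraph d).Walk ⟨(i, 0), le_trans (Nat.le_add_right i k) hk, Nat.zero_le i⟩
      ⟨(i + k, 0), hk, Nat.zero_le _⟩, w.length = k := by
  intro k
  induction k with
  | zero => intro hk; exact ⟨.nil, rfl⟩
  | succ n ih =>
    intro hk
    obtain ⟨w, hw⟩ := ih (by omega)
    have hadj : (Pgraph d).Adj ⟨(i + n, 0), by omega, Nat.zero_le _⟩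
        ⟨(i + (n + 1), 0), hk, Nat.zero_le _⟩ :=
      Or.inr ⟨rfl, rfl, Or.inr rfl⟩
    exact ⟨w.concat hadj, by simp [SimpleGraph.Walk.length_concat, hw]⟩

/-- Walk length lower bound via a 1-Lipschitz potential. -/
lemma walk_potential {d : ℕ} (φ : {p : ℕ × ℕ // p.1 ≤ d ∧ p.2 ≤ p.1} → ℕ)
    (hφ : ∀ a b, (Pgraph d).Adj a b → φ b ≤ φ a + 1) :
    ∀ {a b} (w : (Pgraph d).Walk a b), φ b ≤ φ a + w.length := by
  intro a b w
  induction w with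
  | nil => simp
  | cons h p ih =>
    have := hφ _ _ h
    simp only [SimpleGraph.Walk.length_cons]
    omega

/-- Exact distance formula in `Pgraph d` between vertices on different legs. -/
lemma dist_eq (d i j k j' : ℕ) (hi : i ≤ d) (hj : j ≤ i) (hik : i + k ≤ d)
    (hj' : j' ≤ i + k) (hk : 1 ≤ k) :
    (Pgraph d).dist ⟨(i, j), hi, hj⟩ ⟨(i + k, j'), hik, hj'⟩ = j + j' + k := by
  obtain ⟨w1, hw1⟩ := walk_down d i hi j hj
  obtain ⟨w2, hw2⟩ := walk_spine d i k hik
  obtain ⟨w3, hw3⟩ := walk_down d (i + k) hik j' hj'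
  have hww : ∃ w : (Pgraph d).Walk ⟨(i, j), hi, hj⟩ ⟨(i + k, j'), hik, hj'⟩,
      w.length = j + j' + k := by
    refine ⟨(w1.append w2).append w3.reverse, ?_⟩
    simp [SimpleGraph.Walk.length_append, SimpleGraph.Walk.length_reverse, hw1, hw2, hw3]
    omega
  obtain ⟨w, hw⟩ := hww
  -- potential function measuring distance from `(i, j)`
  set φ : {p : ℕ × ℕ // p.1 ≤ d ∧ p.2 ≤ p.1} → ℕ := fun v =>
    if v.1.1 = i then (v.1.2 - j) + (j - v.1.2)
    else j + v.1.2 + ((v.1.1 - i) + (i - v.1.1)) with hφdef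
  have hφ : ∀ a b, (Pgraph d).Adj a b → φ b ≤ φ a + 1 := by
    rintro ⟨⟨x, y⟩, hx⟩ ⟨⟨x', y'⟩, hx'⟩ hadj
    have h : (x = x' ∧ (y = y' + 1 ∨ y' = y + 1)) ∨
        (y = 0 ∧ y' = 0 ∧ (x = x' + 1 ∨ x' = x + 1)) := hadj
    show (if x' = i then (y' - j) + (j - y') else j + y' + ((x' - i) + (i - x'))) ≤
      (if x = i then (y - j) + (j - y) else j + y + ((x - i) + (i - x))) + 1
    split_ifs <;> omega
  have hlb : j + j' + k ≤ (Pgraph d).dist ⟨(i, j), hi, hj⟩ ⟨(i + k, j'), hik, hj'⟩ := by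
    obtain ⟨p, hp⟩ := (SimpleGraph.Walk.reachable w).exists_walk_length_eq_dist
    have hpot := walk_potential φ hφ p
    have hφu : φ ⟨(i, j), hi, hj⟩ = 0 := by
      show (if i = i then (j - j) + (j - j) else _) = 0
      rw [if_pos rfl]; omega
    have hφv : φ ⟨(i + k, j'), hik, hj'⟩ = j + j' + k := by
      show (if i + k = i then (j' - j) + (j - j') else j + j' + ((i + k - i) + (i - (i + k)))) = j + j' + k
      rw [if_neg (by omega)]; omega
    omega
  have hub := SimpleGraph.dist_le w
  omega

end PgraphAux

/-- For any even integer `d ≥ 2`, any coloring of `P₃ᵈ` in which vertices at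
distance exactly `d` receive distinct colors uses at least `log₂(d + 8) - 2`
colors, i.e. `χ(P₃ᵈ, d) ≥ log₂(d + 8) - 2`. -/
theorem Pgraph_exact_dist_chromatic_lb (d : ℕ) (hd : Even d) (hd2 : 2 ≤ d) :
    ∀ (C : ℕ) (f : {p : ℕ × ℕ // p.1 ≤ d ∧ p.2 ≤ p.1} → Fin C),
      (∀ u v, u ≠ v → (Pgraph d).dist u v = d → f u ≠ f v) →
      Real.logb 2 ((d : ℝ) + 8) - 2 ≤ C := by
  intro C f hf
  obtain ⟨m, hm⟩ := hd
  have hm1 : 1 ≤ m := by omega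
  -- conflict lemma: two vertices on different legs whose "distance sum" is `d`
  -- get different colors
  have key : ∀ i₁ j₁ i₂ j₂ (h₁ : i₁ ≤ d) (hj₁ : j₁ ≤ i₁) (h₂ : i₂ ≤ d) (hj₂ : j₂ ≤ i₂),
      i₁ < i₂ → j₁ + j₂ + (i₂ - i₁) = d →
      f ⟨(i₁, j₁), h₁, hj₁⟩ ≠ f ⟨(i₂, j₂), h₂, hj₂⟩ := by
    intro i₁ j₁ i₂ j₂ h₁ hj₁ h₂ hj₂ hlt hsum
    refine hf _ _ ?_ ?_
    · intro hcon
      have h5 : (i₁, j₁) = (i₂, j₂) := congrArg Subtype.val hcon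
      have : i₁ = i₂ := congrArg Prod.fst h5
      omega
    · have hde := PgraphAux.dist_eq d i₁ j₁ (i₂ - i₁) j₂ h₁ hj₁ (by omega) (by omega)
        (by omega)
      have hveq : (⟨(i₁ + (i₂ - i₁), j₂), by omega, by omega⟩ :
          {p : ℕ × ℕ // p.1 ≤ d ∧ p.2 ≤ p.1}) = ⟨(i₂, j₂), h₂, hj₂⟩ := by
        apply Subtype.ext; simp; omega
      rw [hveq] at hde
      omega
  set K : ℕ := (m + 5) / 2 with hK
  set F : ℕ → Fin C → Prop := fun x c =>
    ∃ i j, ∃ (hi : i ≤ d) (hj : j ≤ i), j ≤ m ∧ i + j = x + m ∧ f ⟨(i, j), hi, hj⟩ = c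
    with hF
  -- core distinctness of fingerprints
  have core : ∀ k l, k < l → l < K → F (m - 1 + 2 * k) ≠ F (m - 1 + 2 * l) := by
    intro k l hkl hlK heq
    by_cases hcase : k + l ≤ m + 1 ∧ l - k ≤ m
    · obtain ⟨hcsum, hcdiff⟩ := hcase
      have hiw : m - 1 + k + l ≤ d := by omega
      have hjw : m - (l - k) ≤ m - 1 + k + l := by omega
      have hFx : F (m - 1 + 2 * k) (f ⟨(m - 1 + k + l, m - (l - k)), hiw, hjw⟩) :=
        ⟨m - 1 + k + l, m - (l - k), hiw, hjw, by omega, by omega, rfl⟩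
      rw [heq] at hFx
      obtain ⟨i', j', hi', hj', hj'm, hsum', hcol⟩ := hFx
      exact key (m - 1 + k + l) (m - (l - k)) i' j' hiw hjw hi' hj'
        (by omega) (by omega) hcol.symm
    · -- here necessarily `2 l = m + 3`, so `F (m - 1 + 2 l)` is empty while
      -- `F (m - 1 + 2 k)` is not
      have h2l : 2 * l = m + 3 := by omega
      have hne : ∃ i0 j0, ∃ (hi0 : i0 ≤ d) (hj0 : j0 ≤ i0),
          j0 ≤ m ∧ i0 + j0 = (m - 1 + 2 * k) + m := by
        rcases Nat.eq_zero_or_pos k with hk0 | hk0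
        · exact ⟨m, m - 1, by omega, by omega, by omega, by omega⟩
        · exact ⟨m - 1 + 2 * k, m, by omega, by omega, le_refl m, by omega⟩
      obtain ⟨i0, j0, hi0, hj0, hj0m, hsum0⟩ := hne
      have hFx : F (m - 1 + 2 * k) (f ⟨(i0, j0), hi0, hj0⟩) :=
        ⟨i0, j0, hi0, hj0, hj0m, hsum0, rfl⟩
      rw [heq] at hFx
      obtain ⟨i', j', hi', hj', hj'm, hsum', -⟩ := hFx
      omega
  -- fingerprints give an injection of `Fin K` into `Fin C → Prop`
  have hinj : Function.Injective (fun t : Fin K => F (m - 1 + 2 * t.val)) := by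
    intro a b hab
    by_contra hne
    have hne' : a.val ≠ b.val := fun h => hne (Fin.ext h)
    rcases lt_or_gt_of_ne hne' with h | h
    · exact core a b h b.isLt hab
    · exact core b a h a.isLt hab.symm
  have hcard : K ≤ 2 ^ C := by
    have := Fintype.card_le_of_injective _ hinj
    simpa [Fintype.card_fun, Fintype.card_prop] using this
  -- arithmetic conclusion
  have hfin : d + 8 ≤ 2 ^ (C + 2) := by
    have hpow : (2 : ℕ) ^ (C + 2) = 4 * 2 ^ C := by ring
    omega
  have hfinR : ((d : ℝ) + 8) ≤ (2 : ℝ) ^ (C + 2) := by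
    have := (Nat.cast_le (α := ℝ)).mpr hfin
    push_cast at this
    linarith
  have hlog : Real.logb 2 ((d : ℝ) + 8) ≤ C + 2 := by
    have h1 : Real.logb 2 ((d : ℝ) + 8) ≤ Real.logb 2 ((2 : ℝ) ^ (C + 2)) :=
      Real.logb_le_logb_of_le one_lt_two (by positivity) hfinR
    have h2 : Real.logb 2 ((2 : ℝ) ^ (C + 2)) = (C + 2 : ℕ) := by
      rw [Real.logb_pow, Real.logb_self_eq_one (by norm_num)]
      ring
    rw [h2] at h1
    push_cast at h1 ⊢
    linarith
  linarith
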